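/- arXiv:1710.05127 — 2 statements merged into one kernel-verified Lean document; each statement's English description precedes it below -/
import Mathlib

section
/- Let n, k, m, r be integers with n ≥ 1, 2 ≤ k, and 1 ≤ r ≤ ⌊k/2⌋, and suppose m + k − j ≠ 0 for every j with 0 ≤ j ≤ r − 1. Define rational numbers c_{m,0} = 1 and c_{m,s} = 1/((k+m)(k+m−1)⋯(k+m−s+1)·s!) for s ≥ 1. Then Σ_{s=0}^{r} c_{m,s} · (r!/(r−s)!) · (n−k+r+1)(n−k+r+2)⋯(n−k+r+s) = ((m+n+r+1)(m+n+r)⋯(m+n+2)) / ((m+k)(m+k−1)⋯(m+k−r+1)), as an identity of rational numbers. -/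
/-- Auxiliary sum `F r x y = ∑ C(r,s) · x^{rising s} · (y-s)^{falling (r-s)}`. -/
def Fv (r : ℕ) (x y : ℚ) : ℚ :=
  ∑ s ∈ Finset.range (r + 1),
    (r.choose s : ℚ) * (∏ j ∈ Finset.range s, (x + j)) *
      ∏ t ∈ Finset.range (r - s), (y - s - t)

lemma Fv_succ (r : ℕ) (x y : ℚ) : Fv (r + 1) x y = (x + y) * Fv r x (y - 1) := by
  unfold Fv
  rw [Finset.sum_range_succ']
  have hterm : ∀ s ∈ Finset.range (r + 1),
      ((r + 1).choose (s + 1) : ℚ) * (∏ j ∈ Finset.range (s + 1), (x + j)) *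
        (∏ t ∈ Finset.range (r + 1 - (s + 1)), (y - (s + 1 : ℕ) - t)) =
      (x + y) * ((r.choose s : ℚ) * (∏ j ∈ Finset.range s, (x + j)) *
          ∏ t ∈ Finset.range (r - s), ((y - 1) - s - t)) +
        (((r.choose (s + 1) : ℚ) * (∏ j ∈ Finset.range (s + 1), (x + j)) *
            ∏ t ∈ Finset.range (r + 1 - (s + 1)), (y - (s + 1 : ℕ) - t)) -
          ((r.choose s : ℚ) * (∏ j ∈ Finset.range s, (x + j)) *
            ∏ t ∈ Finset.range (r + 1 - s), (y - (s : ℕ) - t))) := by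
    intro s hs
    rw [Finset.mem_range] at hs
    have hs' : s ≤ r := Nat.lt_succ_iff.mp hs
    have h1 : r + 1 - (s + 1) = r - s := by omega
    have h2 : r + 1 - s = (r - s) + 1 := by omega
    have hQ : ∏ t ∈ Finset.range (r + 1 - (s + 1)), (y - (s + 1 : ℕ) - (t : ℚ)) =
        ∏ t ∈ Finset.range (r - s), ((y - 1) - s - t) := by
      rw [h1]
      refine Finset.prod_congr rfl fun t _ => ?_
      push_cast; ring
    have hP : ∏ t ∈ Finset.range (r + 1 - s), (y - (s : ℕ) - (t : ℚ)) =
        (y - s) * ∏ t ∈ Finset.range (r - s), ((y - 1) - s - t) := by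
      rw [h2, Finset.prod_range_succ']
      have : ∀ t ∈ Finset.range (r - s), (y - (s:ℚ) - ((t + 1 : ℕ) : ℚ)) =
          ((y - 1) - s - t) := by intro t _; push_cast; ring
      rw [Finset.prod_congr rfl this]
      ring
    have hA : ∏ j ∈ Finset.range (s + 1), (x + (j : ℚ)) =
        (∏ j ∈ Finset.range s, (x + j)) * (x + s) := Finset.prod_range_succ _ _
    rw [hQ, hP, hA, Nat.choose_succ_succ]
    push_cast
    ring
  rw [Finset.sum_congr rfl hterm, Finset.sum_add_distrib, Finset.sum_range_sub
    (f := fun s => (r.choose s : ℚ) * (∏ j ∈ Finset.range s, (x + j)) *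
      ∏ t ∈ Finset.range (r + 1 - s), (y - (s : ℕ) - t)), ← Finset.mul_sum]
  simp [Nat.choose_succ_self]

lemma Fv_eq (r : ℕ) (x y : ℚ) : Fv r x y = ∏ i ∈ Finset.range r, (x + y - i) := by
  induction r generalizing y with
  | zero => simp [Fv]
  | succ r ih =>
    rw [Fv_succ, ih, Finset.prod_range_succ']
    have : ∀ i ∈ Finset.range r, (x + y - ((i + 1 : ℕ) : ℚ)) = (x + (y - 1) - i) := by
      intro i _; push_cast; ring
    rw [Finset.prod_congr rfl this]
    ring

theorem sum_c_eq_ratio (n k m : ℤ) (r : ℕ)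
    (hn : 1 ≤ n) (hk : 2 ≤ k) (hr : 1 ≤ r) (hrk : (r : ℤ) ≤ k / 2)
    (hm : ∀ j : ℕ, j < r → m + k - (j : ℤ) ≠ 0)
    (c : ℕ → ℚ) (hc0 : c 0 = 1)
    (hc : ∀ s : ℕ, 1 ≤ s →
      c s = 1 / ((∏ t ∈ Finset.range s, ((k : ℚ) + (m : ℚ) - (t : ℚ))) * (s.factorial : ℚ))) :
    ∑ s ∈ Finset.range (r + 1),
        c s * ((r.factorial : ℚ) / ((r - s).factorial : ℚ)) *
          ∏ j ∈ Finset.range s, ((n : ℚ) - (k : ℚ) + (r : ℚ) + 1 + (j : ℚ)) =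
      (∏ j ∈ Finset.range r, ((m : ℚ) + (n : ℚ) + 2 + (j : ℚ))) /
        ∏ t ∈ Finset.range r, ((m : ℚ) + (k : ℚ) - (t : ℚ)) := by
  set x : ℚ := (n : ℚ) - k + r + 1 with hx
  set y : ℚ := (m : ℚ) + k with hy
  -- nonvanishing facts
  have hfac : ∀ t : ℕ, t < r → y - t ≠ 0 := by
    intro t ht
    have := hm t ht
    have : ((m + k - (t : ℤ) : ℤ) : ℚ) ≠ 0 := by exact_mod_cast this
    push_cast at this
    simpa [hy] using this
  have hPs : ∀ s : ℕ, s ≤ r → (∏ t ∈ Finset.range s, (y - t)) ≠ 0 := by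
    intro s hs
    exact Finset.prod_ne_zero_iff.mpr fun t ht =>
      hfac t (lt_of_lt_of_le (Finset.mem_range.mp ht) hs)
  have hP : (∏ t ∈ Finset.range r, ((m : ℚ) + k - (t : ℚ))) ≠ 0 := hPs r le_rfl
  rw [eq_div_iff hP, Finset.sum_mul]
  have hterm : ∀ s ∈ Finset.range (r + 1),
      c s * ((r.factorial : ℚ) / ((r - s).factorial : ℚ)) *
          (∏ j ∈ Finset.range s, (x + (j : ℚ))) *
          (∏ t ∈ Finset.range r, (y - (t : ℚ))) =
      (r.choose s : ℚ) * (∏ j ∈ Finset.range s, (x + j)) *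
        ∏ t ∈ Finset.range (r - s), (y - s - t) := by
    intro s hs
    rw [Finset.mem_range] at hs
    have hs' : s ≤ r := Nat.lt_succ_iff.mp hs
    have hcs : c s = 1 / ((∏ t ∈ Finset.range s, (y - t)) * (s.factorial : ℚ)) := by
      rcases Nat.eq_zero_or_pos s with h0 | h1
      · subst h0; simpa using hc0
      · rw [hc s h1]
        congr 2
        exact Finset.prod_congr rfl fun t _ => by ring
    have hsplit : (∏ t ∈ Finset.range r, (y - (t : ℚ))) =
        (∏ t ∈ Finset.range s, (y - t)) * ∏ t ∈ Finset.range (r - s), (y - s - t) := by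
      have h := Finset.prod_range_add (fun t => (y - (t : ℚ))) s (r - s)
      rw [show s + (r - s) = r by omega] at h
      rw [h]
      congr 1
      exact Finset.prod_congr rfl fun t _ => by push_cast; ring
    have hchoose : (r.choose s : ℚ) =
        (r.factorial : ℚ) / ((s.factorial : ℚ) * ((r - s).factorial : ℚ)) :=
      Nat.cast_choose ℚ hs'
    have hs0 : ((s.factorial : ℚ)) ≠ 0 := Nat.cast_ne_zero.mpr s.factorial_ne_zero
    have hrs0 : (((r - s).factorial : ℚ)) ≠ 0 := Nat.cast_ne_zero.mpr (r - s).factorial_ne_zero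
    rw [hcs, hsplit, hchoose]
    field_simp [hPs s hs']
  rw [Finset.sum_congr rfl hterm]
  have := Fv_eq r x y
  unfold Fv at this
  rw [this]
  -- finally reindex the product
  rw [show (∏ j ∈ Finset.range r, ((m : ℚ) + n + 2 + j)) =
      ∏ j ∈ Finset.range r, (x + y - j) from ?_]
  · refine (Finset.prod_range_reflect (fun j => (m : ℚ) + n + 2 + j) r).symm.trans ?_
    refine Finset.prod_congr rfl fun j hj => ?_
    rw [Finset.mem_range] at hj
    have : ((r - 1 - j : ℕ) : ℚ) = (r : ℚ) - 1 - j := by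
      have h1 : 1 + j ≤ r := by omega
      push_cast [Nat.sub_sub, Nat.cast_sub h1]
      ring
    rw [this, hx, hy]
    ring
end

section
/- Let n, k, m, r be integers with n ≥ 1, 2 ≤ k, 1 ≤ r ≤ ⌊k/2⌋, and m odd. Define rational numbers c̃_{m,0} = 1 and c̃_{m,s} = 1/((k+m/2)(k+m/2−1)⋯(k+m/2−s+1)·s!) for s ≥ 1 (the denominators are nonzero since m is odd). Then Σ_{s=0}^{r} c̃_{m,s} · (r!/(r−s)!) · (n−k+r+1)(n−k+r+2)⋯(n−k+r+s) = ((m/2+n+r+1)(m/2+n+r)⋯(m/2+n+2)) / ((m/2+k)(m/2+k−1)⋯(m/2+k−r+1)), as an identity of rational numbers. -/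
open Finset in
lemma vand_asc (x y : ℚ) : ∀ r : ℕ,
    ∑ s ∈ range (r+1), (r.choose s : ℚ) * (∏ j ∈ range s, (x + j)) *
      (∏ j ∈ range (r - s), (y + j)) = ∏ j ∈ range r, (x + y + j) := by
  intro r
  induction r with
  | zero => simp
  | succ r ih =>
    have h2 : ∑ s ∈ range (r+1), (r.choose (s+1) : ℚ) * (∏ j ∈ range (s+1), (x + j)) *
        (∏ j ∈ range (r - s), (y + j))
        = (∑ t ∈ range (r+1), (r.choose t : ℚ) * (∏ j ∈ range t, (x + j)) *
          (∏ j ∈ range (r + 1 - t), (y + j))) - ∏ j ∈ range (r+1), (y + j) := by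
      have := Finset.sum_range_succ' (fun t => (r.choose t : ℚ) * (∏ j ∈ range t, (x + j)) *
          (∏ j ∈ range (r + 1 - t), (y + j))) (r+1)
      -- LHS of `this` : sum over range (r+2)
      have hz : (r.choose (r+1) : ℚ) = 0 := by
        simp [Nat.choose_eq_zero_of_lt]
      rw [Finset.sum_range_succ (fun t => (r.choose t : ℚ) * (∏ j ∈ range t, (x + j)) *
          (∏ j ∈ range (r + 1 - t), (y + j))) (r+1)] at this
      simp only [hz, zero_mul, add_zero, Nat.succ_sub_succ] at this
      simp only [Nat.choose_zero_right, Nat.cast_one, one_mul, Finset.prod_range_zero,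
        Nat.sub_zero] at this
      -- this : ∑_{t≤r} g t = ∑_{s≤r} g (s+1) + prod(y, r+1) ... check orientation
      rw [this]
      ring
    rw [Finset.sum_range_succ' (fun s => ((r+1).choose s : ℚ) * (∏ j ∈ range s, (x + j)) *
        (∏ j ∈ range (r + 1 - s), (y + j))) (r+1)]
    simp only [Nat.choose_succ_succ, Nat.cast_add, Nat.succ_sub_succ, Nat.choose_zero_right,
      Nat.cast_one, one_mul, Finset.prod_range_zero, Nat.sub_zero]
    have hsplit : ∀ s ∈ range (r+1),
        ((r.choose s : ℚ) + (r.choose (s+1) : ℚ)) * (∏ j ∈ range (s+1), (x + j)) *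
          (∏ j ∈ range (r - s), (y + j))
        = (r.choose s : ℚ) * (∏ j ∈ range (s+1), (x + j)) * (∏ j ∈ range (r - s), (y + j))
          + (r.choose (s+1) : ℚ) * (∏ j ∈ range (s+1), (x + j)) * (∏ j ∈ range (r - s), (y + j)) := by
      intro s _; ring
    rw [Finset.sum_congr rfl hsplit, Finset.sum_add_distrib, h2]
    have h1 : ∑ s ∈ range (r+1), (r.choose s : ℚ) * (∏ j ∈ range (s+1), (x + j)) *
        (∏ j ∈ range (r - s), (y + j))
        = ∑ s ∈ range (r+1), (x + s) * ((r.choose s : ℚ) * (∏ j ∈ range s, (x + j)) *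
          (∏ j ∈ range (r - s), (y + j))) := by
      refine Finset.sum_congr rfl fun s _ => ?_
      rw [Finset.prod_range_succ]; ring
    have h3 : ∑ t ∈ range (r+1), (r.choose t : ℚ) * (∏ j ∈ range t, (x + j)) *
        (∏ j ∈ range (r + 1 - t), (y + j))
        = ∑ t ∈ range (r+1), (y + (r - t : ℕ)) * ((r.choose t : ℚ) * (∏ j ∈ range t, (x + j)) *
          (∏ j ∈ range (r - t), (y + j))) := by
      refine Finset.sum_congr rfl fun t ht => ?_
      have ht' : t ≤ r := Nat.lt_succ_iff.mp (Finset.mem_range.mp ht)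
      rw [show r + 1 - t = (r - t) + 1 by omega, Finset.prod_range_succ]
      ring
    rw [h1, h3]
    have h4 : ∀ t ∈ range (r+1), (y + ((r - t : ℕ) : ℚ)) *
        ((r.choose t : ℚ) * (∏ j ∈ range t, (x + j)) * (∏ j ∈ range (r - t), (y + j)))
        = (y + (r : ℚ) - t) * ((r.choose t : ℚ) * (∏ j ∈ range t, (x + j)) *
          (∏ j ∈ range (r - t), (y + j))) := by
      intro t ht
      have ht' : t ≤ r := Nat.lt_succ_iff.mp (Finset.mem_range.mp ht)
      rw [Nat.cast_sub ht']; ring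
    rw [Finset.sum_congr rfl h4]
    have : ∑ s ∈ range (r+1), (x + s) * ((r.choose s : ℚ) * (∏ j ∈ range s, (x + j)) *
          (∏ j ∈ range (r - s), (y + j)))
        + (∑ t ∈ range (r+1), (y + (r : ℚ) - t) * ((r.choose t : ℚ) * (∏ j ∈ range t, (x + j)) *
          (∏ j ∈ range (r - t), (y + j))))
        = (x + y + r) * ∑ s ∈ range (r+1), (r.choose s : ℚ) * (∏ j ∈ range s, (x + j)) *
          (∏ j ∈ range (r - s), (y + j)) := by
      rw [Finset.mul_sum, ← Finset.sum_add_distrib]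
      refine Finset.sum_congr rfl fun s _ => ?_
      ring
    calc _ = (∑ s ∈ range (r+1), (x + s) * ((r.choose s : ℚ) * (∏ j ∈ range s, (x + j)) *
          (∏ j ∈ range (r - s), (y + j)))
        + (∑ t ∈ range (r+1), (y + (r : ℚ) - t) * ((r.choose t : ℚ) * (∏ j ∈ range t, (x + j)) *
          (∏ j ∈ range (r - t), (y + j))))) := by ring
      _ = (x + y + r) * ∏ j ∈ range r, (x + y + j) := by rw [this, ih]
      _ = ∏ j ∈ range (r+1), (x + y + j) := by rw [Finset.prod_range_succ]; ring
open Finset in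
lemma prod_shift_desc (d : ℚ) (t : ℕ) :
    ∏ j ∈ range t, (d + (t : ℚ) - 1 - j) = ∏ j ∈ range t, (d + j) := by
  rw [← Finset.prod_range_reflect (fun j => d + (j:ℚ)) t]
  refine Finset.prod_congr rfl fun j hj => ?_
  have hj' : j < t := Finset.mem_range.mp hj
  have h1 : t - 1 - j = t - (j + 1) := by omega
  rw [h1, Nat.cast_sub (by omega : j + 1 ≤ t)]
  push_cast
  ring

theorem sum_c_tilde_eq_ratio (n k m : ℤ) (r : ℕ)
    (hn : 1 ≤ n) (hk : 2 ≤ k) (hr : 1 ≤ r) (hrk : (r : ℤ) ≤ k / 2)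
    (hodd : Odd m)
    (c : ℕ → ℚ) (hc0 : c 0 = 1)
    (hc : ∀ s : ℕ, 1 ≤ s →
      c s = 1 / ((∏ t ∈ Finset.range s, ((k : ℚ) + (m : ℚ) / 2 - (t : ℚ))) *
        (s.factorial : ℚ))) :
    ∑ s ∈ Finset.range (r + 1),
        c s * ((r.factorial : ℚ) / ((r - s).factorial : ℚ)) *
          ∏ j ∈ Finset.range s, ((n : ℚ) - (k : ℚ) + (r : ℚ) + 1 + (j : ℚ)) =
      (∏ j ∈ Finset.range r, ((m : ℚ) / 2 + (n : ℚ) + 2 + (j : ℚ))) /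
        ∏ t ∈ Finset.range r, ((m : ℚ) / 2 + (k : ℚ) - (t : ℚ)) := by
  have hne : ∀ a : ℤ, (m : ℚ) / 2 + (a : ℚ) ≠ 0 := by
    intro a h
    have hm : (m : ℚ) = -2 * a := by linarith
    have : m = -2 * a := by exact_mod_cast hm
    rcases hodd with ⟨l, hl⟩; omega
  have hQne : ∀ s : ℕ, (∏ t ∈ Finset.range s, ((k : ℚ) + (m : ℚ) / 2 - (t : ℚ))) ≠ 0 := by
    intro s
    refine Finset.prod_ne_zero_iff.mpr fun t _ => ?_
    have := hne (k - t)
    intro h; apply this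
    push_cast
    linarith
  have hDne : (∏ t ∈ Finset.range r, ((m : ℚ) / 2 + (k : ℚ) - (t : ℚ))) ≠ 0 := by
    refine Finset.prod_ne_zero_iff.mpr fun t _ => ?_
    have := hne (k - t)
    intro h; apply this
    push_cast
    linarith
  have hc' : ∀ s : ℕ, c s = 1 / ((∏ t ∈ Finset.range s, ((k : ℚ) + (m : ℚ) / 2 - (t : ℚ))) *
      (s.factorial : ℚ)) := by
    intro s
    rcases Nat.eq_zero_or_pos s with h | h
    · subst h; simpa using hc0
    · exact hc s h
  rw [eq_div_iff hDne, Finset.sum_mul]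
  have hsplit : ∀ s : ℕ, s ≤ r →
      (∏ t ∈ Finset.range r, ((m : ℚ) / 2 + (k : ℚ) - (t : ℚ)))
      = (∏ t ∈ Finset.range s, ((k : ℚ) + (m : ℚ) / 2 - (t : ℚ))) *
        ∏ j ∈ Finset.range (r - s), ((m : ℚ) / 2 + (k : ℚ) - (r : ℚ) + 1 + (j : ℚ)) := by
    intro s hs
    have hr' : r = s + (r - s) := by omega
    conv_lhs => rw [hr', Finset.prod_range_add]
    congr 1
    · exact Finset.prod_congr rfl fun t _ => by ring
    · have hcast : ((r - s : ℕ) : ℚ) = (r : ℚ) - (s : ℚ) := by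
        rw [Nat.cast_sub hs]
      rw [← prod_shift_desc ((m : ℚ) / 2 + (k : ℚ) - (r : ℚ) + 1) (r - s)]
      refine Finset.prod_congr rfl fun j _ => ?_
      rw [hcast]
      push_cast
      ring
  have key : ∀ s ∈ Finset.range (r + 1),
      c s * ((r.factorial : ℚ) / ((r - s).factorial : ℚ)) *
        (∏ j ∈ Finset.range s, ((n : ℚ) - (k : ℚ) + (r : ℚ) + 1 + (j : ℚ))) *
        (∏ t ∈ Finset.range r, ((m : ℚ) / 2 + (k : ℚ) - (t : ℚ)))
      = (r.choose s : ℚ) *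
        (∏ j ∈ Finset.range s, ((n : ℚ) - (k : ℚ) + (r : ℚ) + 1 + (j : ℚ))) *
        ∏ j ∈ Finset.range (r - s), ((m : ℚ) / 2 + (k : ℚ) - (r : ℚ) + 1 + (j : ℚ)) := by
    intro s hs
    have hs' : s ≤ r := Nat.lt_succ_iff.mp (Finset.mem_range.mp hs)
    have hch : ((r.choose s : ℚ)) * (s.factorial : ℚ) * ((r - s).factorial : ℚ)
        = (r.factorial : ℚ) := by
      exact_mod_cast congrArg (Nat.cast : ℕ → ℚ)
        (Nat.choose_mul_factorial_mul_factorial hs')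
    have hsf : (s.factorial : ℚ) ≠ 0 := Nat.cast_ne_zero.mpr s.factorial_ne_zero
    have hrsf : ((r - s).factorial : ℚ) ≠ 0 := Nat.cast_ne_zero.mpr (r - s).factorial_ne_zero
    have hQ := hQne s
    have hchoose : (r.choose s : ℚ) = (r.factorial : ℚ) /
        ((s.factorial : ℚ) * ((r - s).factorial : ℚ)) := by
      rw [eq_div_iff (mul_ne_zero hsf hrsf), ← mul_assoc]
      exact hch
    rw [hsplit s hs', hc' s, hchoose]
    set Q := ∏ t ∈ Finset.range s, ((k : ℚ) + (m : ℚ) / 2 - (t : ℚ)) with hQdef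
    set P := ∏ j ∈ Finset.range s, ((n : ℚ) - (k : ℚ) + (r : ℚ) + 1 + (j : ℚ))
    set B := ∏ j ∈ Finset.range (r - s), ((m : ℚ) / 2 + (k : ℚ) - (r : ℚ) + 1 + (j : ℚ))
    calc 1 / (Q * (s.factorial : ℚ)) * ((r.factorial : ℚ) / ((r - s).factorial : ℚ)) * P *
          (Q * B)
        = (Q / Q) * ((r.factorial : ℚ) / ((s.factorial : ℚ) * ((r - s).factorial : ℚ)) * P * B) := by
          ring
      _ = (r.factorial : ℚ) / ((s.factorial : ℚ) * ((r - s).factorial : ℚ)) * P * B := by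
          rw [div_self hQ, one_mul]
  rw [Finset.sum_congr rfl key,
    vand_asc ((n : ℚ) - (k : ℚ) + (r : ℚ) + 1) ((m : ℚ) / 2 + (k : ℚ) - (r : ℚ) + 1) r]
  exact Finset.prod_congr rfl fun j _ => by ring
end
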